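/- Let q ∈ (0,1), λ ∈ (0,1) with √λ ≠ q, δ ∈ (0,1), C, ν, Y₁, Y₂ ≥ 0, and let (F_k)_{k∈ℕ} be a nonnegative real sequence satisfying F_{k+1} ≤ q·F_k + C·(Y₁·(√λ)^{k+1} + Y₂/(k+1)^δ) + ν for all k ∈ ℕ. Let t̄ ∈ ℕ be any integer with |ln q| − δ/(t̄+1) > 0. Then for all k ∈ ℕ, F_{k+1} ≤ (F₀ + C·Y₂·Σ_{ℓ=0}^{t̄−1} q^{−(ℓ+1)}/(ℓ+1)^δ)·q^{k+1} + (C·Y₁·√λ/|√λ − q|)·max(√λ, q)^{k+1} + C·Y₂·q^{−1}·(|ln q| − δ/(t̄+1))^{−1}/(k+1)^δ + ν/(1−q). -/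

import Mathlib

open Finset

lemma geom_bound' (r : ℝ) (h0 : 0 ≤ r) (h1 : r < 1) (n : ℕ) :
    ∑ i ∈ Finset.range n, r ^ i ≤ 1 / (1 - r) := by
  rw [geom_sum_eq (ne_of_lt h1)]
  have e : (r ^ n - 1) / (r - 1) = (1 - r ^ n) / (1 - r) := by
    rw [show (1 - r ^ n) = -(r ^ n - 1) by ring, show (1 - r) = -(r - 1) by ring,
      neg_div_neg_eq]
  rw [e]
  have hr : 0 < 1 - r := by linarith
  gcongr
  nlinarith [pow_nonneg h0 n]

lemma refl_geom' (r : ℝ) (h0 : 0 ≤ r) (h1 : r < 1) (k : ℕ) :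
    ∑ j ∈ Finset.range (k + 1), r ^ (k - j) ≤ 1 / (1 - r) := by
  have := Finset.sum_range_reflect (fun i => r ^ i) (k + 1)
  simp only [Nat.add_sub_cancel] at this
  calc ∑ j ∈ Finset.range (k + 1), r ^ (k - j)
      = ∑ j ∈ Finset.range (k + 1), r ^ j := by rw [← this]
    _ ≤ 1 / (1 - r) := geom_bound' r h0 h1 _

lemma partA_lemma (q δ : ℝ) (hq0 : 0 < q) (tbar k : ℕ) :
    ∑ j ∈ (Finset.range (k + 1)).filter (fun j => j < tbar),
        q ^ (k - j) / ((j : ℝ) + 1) ^ δ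
      ≤ (∑ l ∈ Finset.range tbar, q ^ (-((l : ℝ) + 1)) / ((l : ℝ) + 1) ^ δ) * q ^ (k + 1) := by
  have hterm : ∀ j ∈ (Finset.range (k + 1)).filter (fun j => j < tbar),
      q ^ (k - j) / ((j : ℝ) + 1) ^ δ
        = (q ^ (-((j : ℝ) + 1)) / ((j : ℝ) + 1) ^ δ) * q ^ (k + 1) := by
    intro j hj
    have hjk : j ≤ k := Nat.lt_succ_iff.mp (Finset.mem_range.mp (Finset.mem_filter.mp hj).1)
    have e1 : (q : ℝ) ^ (k - j) = q ^ ((k : ℝ) - (j : ℝ)) := by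
      rw [← Real.rpow_natCast q (k - j), Nat.cast_sub hjk]
    have e2 : q ^ ((k : ℝ) - (j : ℝ)) = q ^ (-((j : ℝ) + 1)) * q ^ ((k : ℝ) + 1) := by
      rw [← Real.rpow_add hq0]
      ring_nf
    have e3 : q ^ ((k : ℝ) + 1) = q ^ (k + 1) := by
      rw [← Real.rpow_natCast q (k + 1)]
      push_cast
      ring_nf
    rw [e1, e2, e3]
    ring
  rw [Finset.sum_congr rfl hterm, ← Finset.sum_mul]
  have hsub : ∑ j ∈ (Finset.range (k + 1)).filter (fun j => j < tbar),
      q ^ (-((j : ℝ) + 1)) / ((j : ℝ) + 1) ^ δ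
        ≤ ∑ l ∈ Finset.range tbar, q ^ (-((l : ℝ) + 1)) / ((l : ℝ) + 1) ^ δ := by
    refine Finset.sum_le_sum_of_subset_of_nonneg ?_ ?_
    · intro j hj
      exact Finset.mem_range.mpr (Finset.mem_filter.mp hj).2
    · intro j _ _
      have h1 : (0:ℝ) < q ^ (-((j : ℝ) + 1)) := Real.rpow_pos_of_pos hq0 _
      positivity
  exact mul_le_mul_of_nonneg_right hsub (by positivity)

lemma term_bound (q δ a : ℝ) (hq0 : 0 < q) (hδ0 : 0 ≤ δ)
    (tbar j k : ℕ) (htj : tbar ≤ j) (hjk : j ≤ k)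
    (hna : -a = Real.log q + δ / ((tbar : ℝ) + 1)) :
    q ^ (k - j) / ((j : ℝ) + 1) ^ δ ≤ Real.exp (-a) ^ (k - j) / ((k : ℝ) + 1) ^ δ := by
  obtain ⟨i, rfl⟩ : ∃ i, k = j + i := ⟨k - j, by omega⟩
  have hext : j + i - j = i := by omega
  rw [hext]
  have hj1 : (0:ℝ) < (j : ℝ) + 1 := by positivity
  have hk1 : (0:ℝ) < ((j + i : ℕ) : ℝ) + 1 := by positivity
  have hk1' : ((j + i : ℕ) : ℝ) + 1 = (j : ℝ) + (i : ℝ) + 1 := by push_cast; ring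
  have hdj : (0:ℝ) < ((j : ℝ) + 1) ^ δ := Real.rpow_pos_of_pos hj1 δ
  have hdk : (0:ℝ) < (((j + i : ℕ) : ℝ) + 1) ^ δ := Real.rpow_pos_of_pos hk1 δ
  rw [div_le_div_iff₀ hdj hdk]
  have htbar1 : (0:ℝ) < (tbar : ℝ) + 1 := by positivity
  have hi0 : (0:ℝ) ≤ (i : ℝ) := by positivity
  have hkey : (i : ℝ) * Real.log q + Real.log (((j + i : ℕ) : ℝ) + 1) * δ
      ≤ (i : ℝ) * (-a) + Real.log ((j : ℝ) + 1) * δ := by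
    have hK : (0:ℝ) < (j : ℝ) + (i : ℝ) + 1 := by positivity
    have hlog : Real.log ((j : ℝ) + (i : ℝ) + 1) - Real.log ((j : ℝ) + 1)
        ≤ (i : ℝ) / ((tbar : ℝ) + 1) := by
      have h1 : Real.log ((j : ℝ) + (i : ℝ) + 1) - Real.log ((j : ℝ) + 1)
          = Real.log (((j : ℝ) + (i : ℝ) + 1) / ((j : ℝ) + 1)) :=
        (Real.log_div (ne_of_gt hK) (ne_of_gt hj1)).symm
      have h2 : Real.log (((j : ℝ) + (i : ℝ) + 1) / ((j : ℝ) + 1))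
          ≤ ((j : ℝ) + (i : ℝ) + 1) / ((j : ℝ) + 1) - 1 :=
        Real.log_le_sub_one_of_pos (div_pos hK hj1)
      have h3 : ((j : ℝ) + (i : ℝ) + 1) / ((j : ℝ) + 1) - 1 = (i : ℝ) / ((j : ℝ) + 1) := by
        field_simp
        ring
      have htj' : (tbar : ℝ) + 1 ≤ (j : ℝ) + 1 := by
        have : (tbar : ℝ) ≤ (j : ℝ) := Nat.cast_le.mpr htj
        linarith
      have h4 : (i : ℝ) / ((j : ℝ) + 1) ≤ (i : ℝ) / ((tbar : ℝ) + 1) := by gcongr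
      linarith
    have h5 : δ * (Real.log ((j : ℝ) + (i : ℝ) + 1) - Real.log ((j : ℝ) + 1))
        ≤ δ * ((i : ℝ) / ((tbar : ℝ) + 1)) := mul_le_mul_of_nonneg_left hlog hδ0
    have h6 : (i : ℝ) * (-a) = (i : ℝ) * Real.log q + (i : ℝ) * (δ / ((tbar : ℝ) + 1)) := by
      rw [hna]; ring
    have h7 : δ * ((i : ℝ) / ((tbar : ℝ) + 1)) = (i : ℝ) * (δ / ((tbar : ℝ) + 1)) := by
      ring
    rw [h6, hk1']
    linarith
  have eq1 : q ^ i * ((((j + i : ℕ) : ℝ)) + 1) ^ δ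
      = Real.exp ((i : ℝ) * Real.log q + Real.log (((j + i : ℕ) : ℝ) + 1) * δ) := by
    rw [Real.exp_add]
    congr 1
    · calc q ^ i = Real.exp (Real.log q) ^ i := by rw [Real.exp_log hq0]
        _ = Real.exp ((i : ℝ) * Real.log q) := (Real.exp_nat_mul _ i).symm
    · exact Real.rpow_def_of_pos hk1 δ
  have eq2 : Real.exp (-a) ^ i * (((j : ℝ)) + 1) ^ δ
      = Real.exp ((i : ℝ) * (-a) + Real.log ((j : ℝ) + 1) * δ) := by
    rw [Real.exp_add]
    congr 1
    · exact (Real.exp_nat_mul _ i).symm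
    · exact Real.rpow_def_of_pos hj1 δ
  rw [eq1, eq2]
  exact Real.exp_le_exp.mpr hkey

lemma partB_lemma (q δ a : ℝ) (hq0 : 0 < q) (hq1 : q < 1) (hδ0 : 0 ≤ δ) (ha0 : 0 < a)
    (tbar k : ℕ) (hna : -a = Real.log q + δ / ((tbar : ℝ) + 1)) :
    ∑ j ∈ (Finset.range (k + 1)).filter (fun j => ¬ j < tbar),
        q ^ (k - j) / ((j : ℝ) + 1) ^ δ ≤ (q⁻¹ * a⁻¹) / ((k : ℝ) + 1) ^ δ := by
  have hk1 : (0:ℝ) < (k : ℝ) + 1 := by positivity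
  have hdk : (0:ℝ) < ((k : ℝ) + 1) ^ δ := Real.rpow_pos_of_pos hk1 δ
  have hr0 : 0 < Real.exp (-a) := Real.exp_pos _
  have hr1 : Real.exp (-a) < 1 := Real.exp_lt_one_iff.mpr (by linarith)
  have hrq : q ≤ Real.exp (-a) := by
    rw [hna]
    calc q = Real.exp (Real.log q) := (Real.exp_log hq0).symm
      _ ≤ Real.exp (Real.log q + δ / ((tbar : ℝ) + 1)) := by
          apply Real.exp_le_exp.mpr
          have : (0:ℝ) ≤ δ / ((tbar : ℝ) + 1) := by positivity
          linarith
  have hterm : ∀ j ∈ (Finset.range (k + 1)).filter (fun j => ¬ j < tbar),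
      q ^ (k - j) / ((j : ℝ) + 1) ^ δ ≤ Real.exp (-a) ^ (k - j) / ((k : ℝ) + 1) ^ δ := by
    intro j hj
    obtain ⟨hj1, hj2⟩ := Finset.mem_filter.mp hj
    exact term_bound q δ a hq0 hδ0 tbar j k (Nat.not_lt.mp hj2)
      (Nat.lt_succ_iff.mp (Finset.mem_range.mp hj1)) hna
  calc ∑ j ∈ (Finset.range (k + 1)).filter (fun j => ¬ j < tbar),
        q ^ (k - j) / ((j : ℝ) + 1) ^ δ
      ≤ ∑ j ∈ (Finset.range (k + 1)).filter (fun j => ¬ j < tbar),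
        Real.exp (-a) ^ (k - j) / ((k : ℝ) + 1) ^ δ := Finset.sum_le_sum hterm
    _ ≤ ∑ j ∈ Finset.range (k + 1), Real.exp (-a) ^ (k - j) / ((k : ℝ) + 1) ^ δ := by
        refine Finset.sum_le_sum_of_subset_of_nonneg (Finset.filter_subset _ _) ?_
        intro j _ _
        positivity
    _ = (∑ j ∈ Finset.range (k + 1), Real.exp (-a) ^ (k - j)) / ((k : ℝ) + 1) ^ δ := by
        rw [Finset.sum_div]
    _ ≤ (1 / (1 - Real.exp (-a))) / ((k : ℝ) + 1) ^ δ := by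
        gcongr
        exact refl_geom' _ hr0.le hr1 k
    _ ≤ (q⁻¹ * a⁻¹) / ((k : ℝ) + 1) ^ δ := by
        have hqa : q * a ≤ 1 - Real.exp (-a) := by
          have h1 : a + 1 ≤ Real.exp a := Real.add_one_le_exp a
          have h2 : Real.exp (-a) * (a + 1) ≤ Real.exp (-a) * Real.exp a :=
            mul_le_mul_of_nonneg_left h1 hr0.le
          have h3 : Real.exp (-a) * Real.exp a = 1 := by
            rw [← Real.exp_add]; simp
          have h5 : q * a ≤ Real.exp (-a) * a := mul_le_mul_of_nonneg_right hrq ha0.le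
          nlinarith
        have hqa0 : 0 < q * a := mul_pos hq0 ha0
        have h6 : 1 / (1 - Real.exp (-a)) ≤ 1 / (q * a) :=
          one_div_le_one_div_of_le hqa0 hqa
        have heq : 1 / (q * a) = q⁻¹ * a⁻¹ := by
          rw [one_div, mul_inv]
        gcongr
        rw [← heq]; exact h6


/-- Deterministic core of Theorem 2 (convergence) of the paper: the KL divergence
`F k` contracts with factor `q = exp(-αρ_U)`, driven by the consensus-error forcing
`C (Y₁ (√λ)^(k+1) + Y₂/(k+1)^δ)` and the constant `ν`; the bound exhibits the
asymptotic bias `ν/(1-q)` and the mixed geometric term with `max(√λ, q)`. -/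
theorem stmt_2
    (q lam δ C ν Y₁ Y₂ : ℝ)
    (hq : q ∈ Set.Ioo (0:ℝ) 1) (hlam : lam ∈ Set.Ioo (0:ℝ) 1)
    (hne : Real.sqrt lam ≠ q) (hδ : δ ∈ Set.Ioo (0:ℝ) 1)
    (hC : 0 ≤ C) (hν : 0 ≤ ν) (hY₁ : 0 ≤ Y₁) (hY₂ : 0 ≤ Y₂)
    (F : ℕ → ℝ) (hF : ∀ k, 0 ≤ F k)
    (hrec : ∀ k : ℕ,
      F (k + 1) ≤ q * F k
        + C * (Y₁ * (Real.sqrt lam) ^ (k + 1) + Y₂ / ((k : ℝ) + 1) ^ δ) + ν)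
    (tbar : ℕ) (htbar : 0 < |Real.log q| - δ / ((tbar : ℝ) + 1)) :
    ∀ k : ℕ,
      F (k + 1) ≤
        (F 0 + C * Y₂ * ∑ l ∈ Finset.range tbar, q ^ (-((l : ℝ) + 1)) / ((l : ℝ) + 1) ^ δ)
            * q ^ (k + 1)
          + (C * Y₁ * Real.sqrt lam / |Real.sqrt lam - q|) * (max (Real.sqrt lam) q) ^ (k + 1)
          + (C * Y₂ * q⁻¹ * (|Real.log q| - δ / ((tbar : ℝ) + 1))⁻¹) / ((k : ℝ) + 1) ^ δ
          + ν / (1 - q) := by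
  obtain ⟨hq0, hq1⟩ := hq
  obtain ⟨hl0, hl1⟩ := hlam
  obtain ⟨hδ0, hδ1⟩ := hδ
  set s : ℝ := Real.sqrt lam with hs
  have hs0 : 0 < s := Real.sqrt_pos.mpr hl0
  set m : ℝ := max s q with hm
  have hm0 : 0 < m := lt_of_lt_of_le hs0 (le_max_left _ _)
  have hlogq : Real.log q < 0 := Real.log_neg hq0 hq1
  have habs : |Real.log q| = -Real.log q := abs_of_neg hlogq
  set a : ℝ := |Real.log q| - δ / ((tbar : ℝ) + 1) with ha
  have ha0 : 0 < a := htbar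
  -- the forcing term
  set G : ℕ → ℝ := fun j => C * (Y₁ * s ^ (j + 1) + Y₂ / ((j : ℝ) + 1) ^ δ) + ν with hG
  have hjpos : ∀ j : ℕ, (0:ℝ) < ((j : ℝ) + 1) ^ δ := fun j =>
    Real.rpow_pos_of_pos (by positivity) _
  -- unrolled recursion
  have unroll : ∀ k : ℕ,
      F (k + 1) ≤ q ^ (k + 1) * F 0 + ∑ j ∈ Finset.range (k + 1), q ^ (k - j) * G j := by
    intro k
    induction k with
    | zero =>
      have h := hrec 0
      simp only [hG, zero_add, Finset.sum_range_one, Nat.sub_self, pow_zero, one_mul,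
        pow_one, Nat.cast_zero] at h ⊢
      linarith
    | succ n ih =>
      have h1 : F (n + 2) ≤ q * F (n + 1) + G (n + 1) := by
        have := hrec (n + 1)
        simp only [hG]
        push_cast
        push_cast at this
        linarith
      have h2 : q * (q ^ (n + 1) * F 0 + ∑ j ∈ Finset.range (n + 1), q ^ (n - j) * G j)
          = q ^ (n + 2) * F 0 + ∑ j ∈ Finset.range (n + 1), q ^ (n + 1 - j) * G j := by
        rw [mul_add, Finset.mul_sum]
        congr 1
        · ring
        · refine Finset.sum_congr rfl fun j hj => ?_
          have hj' : j ≤ n := Nat.lt_succ_iff.mp (Finset.mem_range.mp hj)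
          have : n + 1 - j = (n - j) + 1 := by omega
          rw [this, pow_succ]
          ring
      have h3 : ∑ j ∈ Finset.range (n + 2), q ^ (n + 1 - j) * G j
          = ∑ j ∈ Finset.range (n + 1), q ^ (n + 1 - j) * G j + G (n + 1) := by
        rw [Finset.sum_range_succ, Nat.sub_self, pow_zero, one_mul]
      calc F (n + 2) ≤ q * F (n + 1) + G (n + 1) := h1
        _ ≤ q * (q ^ (n + 1) * F 0 + ∑ j ∈ Finset.range (n + 1), q ^ (n - j) * G j)
            + G (n + 1) := by
            have := mul_le_mul_of_nonneg_left ih hq0.le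
            linarith
        _ = q ^ (n + 2) * F 0 + ∑ j ∈ Finset.range (n + 2), q ^ (n + 1 - j) * G j := by
            rw [h2, h3]; ring
  intro k
  -- split the forcing sum
  set S1 : ℝ := ∑ j ∈ Finset.range (k + 1), q ^ (k - j) * s ^ (j + 1) with hS1
  set S2 : ℝ := ∑ j ∈ Finset.range (k + 1), q ^ (k - j) / ((j : ℝ) + 1) ^ δ with hS2
  set S3 : ℝ := ∑ j ∈ Finset.range (k + 1), q ^ (k - j) with hS3
  have hsum_eq : ∑ j ∈ Finset.range (k + 1), q ^ (k - j) * G j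
      = C * Y₁ * S1 + C * Y₂ * S2 + ν * S3 := by
    rw [hS1, hS2, hS3, Finset.mul_sum, Finset.mul_sum, Finset.mul_sum,
      ← Finset.sum_add_distrib, ← Finset.sum_add_distrib]
    refine Finset.sum_congr rfl fun j hj => ?_
    simp only [hG]
    ring
  -- bound S1
  have hS1bound : S1 ≤ s * (m ^ (k + 1) / |s - q|) := by
    have key : (∑ j ∈ Finset.range (k + 1), s ^ j * q ^ (k - j)) * (s - q)
        = s ^ (k + 1) - q ^ (k + 1) := by
      have := geom_sum₂_mul s q (k + 1)
      simpa using this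
    have hsq : s - q ≠ 0 := sub_ne_zero.mpr hne
    have heq : ∑ j ∈ Finset.range (k + 1), s ^ j * q ^ (k - j)
        = (s ^ (k + 1) - q ^ (k + 1)) / (s - q) := by
      field_simp [hsq] at key ⊢
      linarith [key]
    have habs1 : |s ^ (k + 1) - q ^ (k + 1)| ≤ m ^ (k + 1) := by
      have h1 : s ^ (k + 1) ≤ m ^ (k + 1) := pow_le_pow_left₀ hs0.le (le_max_left _ _) _
      have h2 : q ^ (k + 1) ≤ m ^ (k + 1) := pow_le_pow_left₀ hq0.le (le_max_right _ _) _
      have h3 : (0:ℝ) ≤ s ^ (k + 1) := by positivity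
      have h4 : (0:ℝ) ≤ q ^ (k + 1) := by positivity
      rw [abs_sub_le_iff]
      constructor <;> linarith
    have hstep : ∑ j ∈ Finset.range (k + 1), s ^ j * q ^ (k - j)
        ≤ m ^ (k + 1) / |s - q| := by
      rw [heq]
      calc (s ^ (k + 1) - q ^ (k + 1)) / (s - q)
          ≤ |(s ^ (k + 1) - q ^ (k + 1)) / (s - q)| := le_abs_self _
        _ = |s ^ (k + 1) - q ^ (k + 1)| / |s - q| := abs_div _ _
        _ ≤ m ^ (k + 1) / |s - q| := by
            have hd : 0 < |s - q| := abs_pos.mpr hsq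
            gcongr
    have hrw : S1 = s * ∑ j ∈ Finset.range (k + 1), s ^ j * q ^ (k - j) := by
      rw [hS1, Finset.mul_sum]
      refine Finset.sum_congr rfl fun j hj => ?_
      rw [pow_succ]
      ring
    rw [hrw]
    exact mul_le_mul_of_nonneg_left hstep hs0.le
  -- bound S3
  have hS3bound : S3 ≤ 1 / (1 - q) := refl_geom' q hq0.le hq1 k
  -- bound S2
  set T : ℝ := ∑ l ∈ Finset.range tbar, q ^ (-((l : ℝ) + 1)) / ((l : ℝ) + 1) ^ δ with hT
  have hS2bound : S2 ≤ T * q ^ (k + 1) + (q⁻¹ * a⁻¹) / ((k : ℝ) + 1) ^ δ := by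
    have hsplit := Finset.sum_filter_add_sum_filter_not (Finset.range (k + 1))
      (fun j => j < tbar) (fun j => q ^ (k - j) / ((j : ℝ) + 1) ^ δ)
    have hna : -a = Real.log q + δ / ((tbar : ℝ) + 1) := by rw [ha, habs]; ring
    have hA' := partA_lemma q δ hq0 tbar k
    have hB' := partB_lemma q δ a hq0 hq1 hδ0.le ha0 tbar k hna
    rw [← hT] at hA'
    rw [hS2, ← hsplit]
    exact add_le_add hA' hB'
  -- combine
  have main := unroll k
  rw [hsum_eq] at main
  have hA : C * Y₁ * S1 ≤ (C * Y₁ * s / |s - q|) * m ^ (k + 1) := by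
    have := mul_le_mul_of_nonneg_left hS1bound (mul_nonneg hC hY₁)
    calc C * Y₁ * S1 ≤ C * Y₁ * (s * (m ^ (k + 1) / |s - q|)) := this
      _ = (C * Y₁ * s / |s - q|) * m ^ (k + 1) := by ring
  have hB : C * Y₂ * S2 ≤ C * Y₂ * T * q ^ (k + 1)
      + (C * Y₂ * q⁻¹ * a⁻¹) / ((k : ℝ) + 1) ^ δ := by
    have := mul_le_mul_of_nonneg_left hS2bound (mul_nonneg hC hY₂)
    calc C * Y₂ * S2 ≤ C * Y₂ * (T * q ^ (k + 1) + (q⁻¹ * a⁻¹) / ((k : ℝ) + 1) ^ δ) := this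
      _ = C * Y₂ * T * q ^ (k + 1) + (C * Y₂ * q⁻¹ * a⁻¹) / ((k : ℝ) + 1) ^ δ := by ring
  have hν' : ν * S3 ≤ ν / (1 - q) := by
    have := mul_le_mul_of_nonneg_left hS3bound hν
    calc ν * S3 ≤ ν * (1 / (1 - q)) := this
      _ = ν / (1 - q) := by ring
  have hgoal : (F 0 + C * Y₂ * T) * q ^ (k + 1)
      + (C * Y₁ * s / |s - q|) * m ^ (k + 1)
      + (C * Y₂ * q⁻¹ * a⁻¹) / ((k : ℝ) + 1) ^ δ + ν / (1 - q)
      = q ^ (k + 1) * F 0 + (C * Y₂ * T * q ^ (k + 1)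
        + (C * Y₁ * s / |s - q|) * m ^ (k + 1)
        + (C * Y₂ * q⁻¹ * a⁻¹) / ((k : ℝ) + 1) ^ δ + ν / (1 - q)) := by ring
  calc F (k + 1) ≤ q ^ (k + 1) * F 0 + (C * Y₁ * S1 + C * Y₂ * S2 + ν * S3) := main
    _ ≤ (F 0 + C * Y₂ * T) * q ^ (k + 1)
          + (C * Y₁ * s / |s - q|) * m ^ (k + 1)
          + (C * Y₂ * q⁻¹ * a⁻¹) / ((k : ℝ) + 1) ^ δ + ν / (1 - q) := by
        rw [hgoal]
        linarith
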